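/- Let $A \subseteq \mathbf{R}^{n+1}$ be a nonempty closed set and $a \in A$. Then the set $\mathrm{Dis}(A,a) := \{u \in \mathbf{R}^{n+1} : \mathrm{dist}(a+u, A) = |u|\}$ is a closed convex set containing $0$. -/

import Mathlib

open Metric

/-- For a nonempty closed set `A` and `a ∈ A`, the set
`Dis(A,a) = {u : dist(a+u, A) = |u|}` is a closed convex set containing `0`. -/
theorem dis_closed_convex (n : ℕ) (A : Set (EuclideanSpace ℝ (Fin (n+1))))
    (hA : IsClosed A) (hAne : A.Nonempty)
    (a : EuclideanSpace ℝ (Fin (n+1))) (ha : a ∈ A) :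
    IsClosed {u : EuclideanSpace ℝ (Fin (n+1)) | infDist (a + u) A = ‖u‖} ∧
    Convex ℝ {u : EuclideanSpace ℝ (Fin (n+1)) | infDist (a + u) A = ‖u‖} ∧
    (0 : EuclideanSpace ℝ (Fin (n+1))) ∈
      {u : EuclideanSpace ℝ (Fin (n+1)) | infDist (a + u) A = ‖u‖} := by
  refine ⟨?_, ?_, ?_⟩
  · exact isClosed_eq
      ((continuous_infDist_pt A).comp (continuous_const.add continuous_id))
      continuous_norm
  · have hset : {u : EuclideanSpace ℝ (Fin (n+1)) | infDist (a + u) A = ‖u‖} =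
        ⋂ c ∈ A, {u : EuclideanSpace ℝ (Fin (n+1)) |
          inner ℝ (c - a) u ≤ (‖c - a‖ ^ 2) / 2} := by
      ext u
      simp only [Set.mem_setOf_eq, Set.mem_iInter]
      have hle : infDist (a + u) A ≤ ‖u‖ := by
        have := infDist_le_dist_of_mem (x := a + u) ha
        simpa [dist_eq_norm] using this
      constructor
      · intro h c hc
        have h1 : ‖u‖ ≤ dist (a + u) c := by
          rw [← h]; exact infDist_le_dist_of_mem hc
        have h2 : ‖u‖ ≤ ‖u - (c - a)‖ := by
          rw [dist_eq_norm] at h1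
          have : a + u - c = u - (c - a) := by abel
          rwa [this] at h1
        have hsq : ‖u‖ ^ 2 ≤ ‖u - (c - a)‖ ^ 2 := by
          exact pow_le_pow_left₀ (norm_nonneg _) h2 2
        rw [norm_sub_sq_real] at hsq
        have : (inner ℝ u (c - a) : ℝ) = inner ℝ (c - a) u := real_inner_comm _ _
        nlinarith [hsq]
      · intro h
        have h2 : ∀ c ∈ A, ‖u‖ ≤ dist (a + u) c := by
          intro c hc
          have hc' := h c hc
          have hsq : ‖u‖ ^ 2 ≤ ‖u - (c - a)‖ ^ 2 := by
            rw [norm_sub_sq_real]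
            have : (inner ℝ u (c - a) : ℝ) = inner ℝ (c - a) u := real_inner_comm _ _
            nlinarith [hc']
          have h3 : ‖u‖ ≤ ‖u - (c - a)‖ := le_of_sq_le_sq hsq (norm_nonneg _)
          rw [dist_eq_norm]
          have : a + u - c = u - (c - a) := by abel
          rw [this]; exact h3
        refine le_antisymm hle (not_lt.1 fun hlt => ?_)
        obtain ⟨y, hy, hdy⟩ := (infDist_lt_iff hAne).1 hlt
        exact absurd (h2 y hy) (not_le.2 hdy)
    rw [hset]
    exact convex_iInter fun c => convex_iInter fun _ =>
      convex_halfSpace_le ⟨fun x y => inner_add_right _ _ _,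
        fun r x => real_inner_smul_right _ _ _⟩ _
  · simp [infDist_zero_of_mem ha]
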